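/- For every γ ∈ (0,1) and Λ > 0, the function k ↦ 1 / (|k₃|^(1−γ) · ‖k‖²) is integrable on the set {k ∈ ℝ³ : 0 < ‖k‖ ≤ Λ} with respect to Lebesgue measure. -/

import Mathlib

open MeasureTheory

/-- One-dimensional integrability of `|x|^{-p}` for `p < 1` on a bounded interval. -/
lemma oneD_abs_rpow_integrable {p Λ : ℝ} (hp : p < 1) (hΛ : 0 < Λ) :
    IntegrableOn (fun x : ℝ => |x| ^ (-p)) (Set.Icc (-Λ) Λ) := by
  have pos : IntegrableOn (fun x : ℝ => |x| ^ (-p)) (Set.Ioc 0 Λ) := by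
    rw [integrableOn_Ioc_iff_integrableOn_Ioo]
    have h1 : IntegrableOn (fun x : ℝ => x ^ (-p)) (Set.Ioo 0 Λ) :=
      (intervalIntegral.integrableOn_Ioo_rpow_iff hΛ).2 (by linarith)
    refine h1.congr_fun (fun x hx => ?_) measurableSet_Ioo
    rw [abs_of_pos hx.1]
  have neg : IntegrableOn (fun x : ℝ => |x| ^ (-p)) (Set.Ico (-Λ) 0) := by
    rw [← Measure.map_neg_eq_self (volume : Measure ℝ)]
    have m : MeasurableEmbedding fun x : ℝ => -x :=
      (Homeomorph.neg ℝ).measurableEmbedding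
    rw [m.integrableOn_map_iff]
    simp only [Function.comp_def, abs_neg]
    have : (fun x : ℝ => -x) ⁻¹' Set.Ico (-Λ) 0 = Set.Ioc 0 Λ := by
      ext x
      simp only [Set.mem_preimage, Set.mem_Ico, Set.mem_Ioc]
      constructor <;> intro h <;> constructor <;> linarith [h.1, h.2]
    rw [this]
    exact pos
  have hz : IntegrableOn (fun x : ℝ => |x| ^ (-p)) ({0} : Set ℝ) := by
    rw [IntegrableOn, Measure.restrict_singleton, Real.volume_singleton, zero_smul]
    exact integrable_zero_measure
  have hsub : Set.Icc (-Λ) Λ ⊆ (Set.Ico (-Λ) 0 ∪ Set.Ioc 0 Λ) ∪ {0} := by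
    intro x hx
    rcases lt_trichotomy x 0 with h | h | h
    · exact Or.inl (Or.inl ⟨hx.1, h⟩)
    · exact Or.inr (by simp [h])
    · exact Or.inl (Or.inr ⟨h, hx.2⟩)
  exact ((neg.union pos).union hz).mono_set hsub

lemma coord_abs_le_norm (k : EuclideanSpace ℝ (Fin 3)) (i : Fin 3) : |k i| ≤ ‖k‖ := by
  rw [EuclideanSpace.norm_eq, ← Real.sqrt_sq_eq_abs]
  apply Real.sqrt_le_sqrt
  have := Finset.single_le_sum (f := fun j => ‖k j‖ ^ 2)
    (fun j _ => sq_nonneg _) (Finset.mem_univ i)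
  simpa [Real.norm_eq_abs, sq_abs] using this

/-- For every `γ ∈ (0,1)` and `Λ > 0`, the function `k ↦ 1 / (|k₃|^(1−γ) · ‖k‖²)` is
integrable on `{k ∈ ℝ³ : 0 < ‖k‖ ∧ ‖k‖ ≤ Λ}` with respect to Lebesgue measure. -/
theorem stmt_5 (γ Λ : ℝ) (hγ0 : 0 < γ) (hγ1 : γ < 1) (hΛ : 0 < Λ) :
    IntegrableOn
      (fun k : EuclideanSpace ℝ (Fin 3) => 1 / (|k 2| ^ (1 - γ) * ‖k‖ ^ 2))
      {k : EuclideanSpace ℝ (Fin 3) | 0 < ‖k‖ ∧ ‖k‖ ≤ Λ} := by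
  set p : Fin 3 → ℝ := fun i => if i = 2 then 1 - γ/2 else 1 - γ/4 with hp
  have hp_lt : ∀ i, p i < 1 := by
    intro i; simp only [hp]; split <;> linarith
  have hp_pos : ∀ i, 0 < p i := by
    intro i; simp only [hp]; split <;> linarith
  set W : Fin 3 → ℝ → ℝ :=
    fun i => (Set.Icc (-Λ) Λ).indicator (fun x => |x| ^ (-(p i))) with hW
  have hWint : ∀ i, Integrable (W i) := by
    intro i
    exact (oneD_abs_rpow_integrable (hp_lt i) hΛ).integrable_indicator measurableSet_Icc
  have hWnonneg : ∀ i x, 0 ≤ W i x := by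
    intro i x
    exact Set.indicator_nonneg (fun y _ => Real.rpow_nonneg (abs_nonneg y) _) x
  -- integrability of the dominating product on the pi space
  have hG : Integrable (fun x : Fin 3 → ℝ => ∏ i, W i (x i)) :=
    Integrable.fintype_prod hWint
  -- transfer to EuclideanSpace
  have hmp := EuclideanSpace.volume_preserving_symm_measurableEquiv_toLp (Fin 3)
  have hg : Integrable (fun k : EuclideanSpace ℝ (Fin 3) => ∏ i, W i (k i)) := by
    have := (hmp.integrable_comp_emb
      (MeasurableEquiv.toLp 2 (Fin 3 → ℝ)).symm.measurableEmbedding).2 hG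
    exact this
  -- coordinate hyperplanes are null
  have hnull : ∀ i : Fin 3, (volume : Measure (EuclideanSpace ℝ (Fin 3))) {k | k i = 0} = 0 := by
    intro i
    have heq : {k : EuclideanSpace ℝ (Fin 3) | k i = 0} =
        (MeasurableEquiv.toLp 2 (Fin 3 → ℝ)).symm ⁻¹' {x : Fin 3 → ℝ | x i = 0} := rfl
    have hms : MeasurableSet {x : Fin 3 → ℝ | x i = 0} := by
      have : {x : Fin 3 → ℝ | x i = 0} = (fun x : Fin 3 → ℝ => x i) ⁻¹' {0} := rfl
      rw [this]
      exact (measurable_pi_apply i) (measurableSet_singleton (0:ℝ))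
    rw [heq, hmp.measure_preimage hms.nullMeasurableSet]
    exact Measure.pi_hyperplane _ i 0
  have hae : ∀ i : Fin 3, ∀ᵐ k : EuclideanSpace ℝ (Fin 3), k i ≠ 0 := by
    intro i
    rw [ae_iff]
    simpa [not_not] using hnull i
  have hSmeas : MeasurableSet {k : EuclideanSpace ℝ (Fin 3) | 0 < ‖k‖ ∧ ‖k‖ ≤ Λ} := by
    apply MeasurableSet.inter
    · exact measurableSet_lt measurable_const measurable_norm
    · exact measurableSet_le measurable_norm measurable_const
  -- measurability of f
  have hfmeas : AEStronglyMeasurable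
      (fun k : EuclideanSpace ℝ (Fin 3) => 1 / (|k 2| ^ (1 - γ) * ‖k‖ ^ 2))
      (volume.restrict {k : EuclideanSpace ℝ (Fin 3) | 0 < ‖k‖ ∧ ‖k‖ ≤ Λ}) := by
    apply Measurable.aestronglyMeasurable
    have hm2 : Measurable fun k : EuclideanSpace ℝ (Fin 3) => k 2 :=
      (measurable_pi_apply (2 : Fin 3)).comp (MeasurableEquiv.toLp 2 (Fin 3 → ℝ)).symm.measurable
    have hr : Measurable fun x : ℝ => x ^ (1 - γ) := by measurability
    exact Measurable.div measurable_const ((hr.comp hm2.abs).mul (measurable_norm.pow_const 2))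
  refine Integrable.mono' hg.restrict hfmeas ?_
  filter_upwards [ae_restrict_mem hSmeas, ae_restrict_of_ae (hae 0),
    ae_restrict_of_ae (hae 1), ae_restrict_of_ae (hae 2)] with k hk h0 h1 h2
  obtain ⟨hkpos, hkΛ⟩ := hk
  have habs : ∀ i : Fin 3, k i ≠ 0 → 0 < |k i| := fun i hi => abs_pos.2 hi
  have hmem : ∀ i : Fin 3, k i ∈ Set.Icc (-Λ) Λ := by
    intro i
    have := (coord_abs_le_norm k i).trans hkΛ
    exact abs_le.1 this
  have hgk : (∏ i, W i (k i)) = ∏ i, |k i| ^ (-(p i)) := by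
    apply Finset.prod_congr rfl
    intro i _
    exact Set.indicator_of_mem (hmem i) _
  -- key inequality
  have key : |k 0| ^ (p 0) * |k 1| ^ (p 1) * |k 2| ^ (p 2) ≤ |k 2| ^ (1 - γ) * ‖k‖ ^ 2 := by
    have e2 : |k 2| ^ (p 2) = |k 2| ^ (1 - γ) * |k 2| ^ (γ/2) := by
      rw [← Real.rpow_add (habs 2 h2)]
      congr 1
      simp only [hp, if_pos rfl]
      ring
    have h0' : |k 0| ^ (p 0) ≤ ‖k‖ ^ (p 0) :=
      Real.rpow_le_rpow (abs_nonneg _) (coord_abs_le_norm k 0) (hp_pos 0).le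
    have h1' : |k 1| ^ (p 1) ≤ ‖k‖ ^ (p 1) :=
      Real.rpow_le_rpow (abs_nonneg _) (coord_abs_le_norm k 1) (hp_pos 1).le
    have h2' : |k 2| ^ (γ/2) ≤ ‖k‖ ^ (γ/2) :=
      Real.rpow_le_rpow (abs_nonneg _) (coord_abs_le_norm k 2) (by linarith)
    have hnn : (0:ℝ) ≤ ‖k‖ := norm_nonneg _
    calc |k 0| ^ (p 0) * |k 1| ^ (p 1) * |k 2| ^ (p 2)
        = |k 2| ^ (1 - γ) * (|k 0| ^ (p 0) * |k 1| ^ (p 1) * |k 2| ^ (γ/2)) := by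
          rw [e2]; ring
      _ ≤ |k 2| ^ (1 - γ) * (‖k‖ ^ (p 0) * ‖k‖ ^ (p 1) * ‖k‖ ^ (γ/2)) := by
          apply mul_le_mul_of_nonneg_left _ (Real.rpow_nonneg (abs_nonneg _) _)
          apply mul_le_mul (mul_le_mul h0' h1' (Real.rpow_nonneg (abs_nonneg _) _)
            (Real.rpow_nonneg hnn _)) h2' (Real.rpow_nonneg (abs_nonneg _) _)
          positivity
      _ = |k 2| ^ (1 - γ) * ‖k‖ ^ 2 := by
          rw [← Real.rpow_add hkpos, ← Real.rpow_add hkpos]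
          congr 1
          have : p 0 + p 1 + γ/2 = 2 := by
            simp only [hp, if_neg (show (0:Fin 3) ≠ 2 by decide),
              if_neg (show (1:Fin 3) ≠ 2 by decide)]
            ring
          rw [this]
          rw [show ((2:ℝ):ℝ) = ((2:ℕ):ℝ) by norm_num, Real.rpow_natCast]
  have hLpos : 0 < |k 0| ^ (p 0) * |k 1| ^ (p 1) * |k 2| ^ (p 2) := by
    have := habs 0 h0; have := habs 1 h1; have := habs 2 h2
    positivity
  rw [Real.norm_eq_abs]
  have hfnn : 0 ≤ 1 / (|k 2| ^ (1 - γ) * ‖k‖ ^ 2) := by positivity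
  rw [abs_of_nonneg hfnn, hgk]
  have hprod : (∏ i, |k i| ^ (-(p i))) =
      (|k 0| ^ (p 0) * |k 1| ^ (p 1) * |k 2| ^ (p 2))⁻¹ := by
    rw [Fin.prod_univ_three]
    rw [Real.rpow_neg (abs_nonneg _), Real.rpow_neg (abs_nonneg _),
      Real.rpow_neg (abs_nonneg _)]
    rw [mul_inv, mul_inv]
  rw [hprod, one_div]
  exact inv_anti₀ hLpos key
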